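/- Cross-task policy evaluation bound: under the same setting, let 𝒬^{jj}_h be the optimal entropic Q-function of task M_j with optimal policy π*_j, and let 𝒬^{ji}_h be the entropic Q-function of policy π*_j evaluated in task M_i. If sup_{s,a,s'} |r_i(s,a,s') − r_j(s,a,s')| ≤ δ, then sup_{s,a} |𝒬^{jj}_h(s,a) − 𝒬^{ji}_h(s,a)| ≤ (T − h + 1)δ for all h ≤ T + 1. -/

import Mathlib

open Finset

/-- The entropic utility of `f(s')` where `s' ∼ p`, for a finite distribution `p`. -/
noncomputable def Ubel {S : Type*} [Fintype S] (β : ℝ) (p : S → ℝ) (f : S → ℝ) : ℝ :=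
  (1 / β) * Real.log (∑ s', p s' * Real.exp (β * f s'))

lemma ubel_sum_pos {S : Type*} [Fintype S] (β : ℝ) (p : S → ℝ)
    (hp0 : ∀ s, 0 ≤ p s) (hp1 : ∑ s, p s = 1) (f : S → ℝ) :
    0 < ∑ s', p s' * Real.exp (β * f s') := by
  have h : ∃ i ∈ Finset.univ (α := S), 0 < p i := by
    by_contra h
    push_neg at h
    have : ∑ s, p s = 0 := Finset.sum_eq_zero fun s _ => le_antisymm (h s (mem_univ s)) (hp0 s)
    rw [hp1] at this; norm_num at this
  obtain ⟨i, _, hi⟩ := h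
  refine Finset.sum_pos' (fun s _ => mul_nonneg (hp0 s) (Real.exp_pos _).le) ?_
  exact ⟨i, mem_univ i, mul_pos hi (Real.exp_pos _)⟩

lemma ubel_mono {S : Type*} [Fintype S] {β : ℝ} (hβ : β ≠ 0) {p : S → ℝ}
    (hp0 : ∀ s, 0 ≤ p s) (hp1 : ∑ s, p s = 1) {f g : S → ℝ}
    (hfg : ∀ s, f s ≤ g s) : Ubel β p f ≤ Ubel β p g := by
  unfold Ubel
  rcases lt_or_gt_of_ne hβ with hb | hb
  · have hsum : ∑ s', p s' * Real.exp (β * g s') ≤ ∑ s', p s' * Real.exp (β * f s') :=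
      Finset.sum_le_sum fun s _ => by
        have : β * g s ≤ β * f s := mul_le_mul_of_nonpos_left (hfg s) hb.le
        exact mul_le_mul_of_nonneg_left (Real.exp_le_exp.2 this) (hp0 s)
    have hpos := ubel_sum_pos β p hp0 hp1 g
    have hlog := Real.log_le_log hpos hsum
    have h1β : (1 / β) ≤ 0 := by
      apply div_nonpos_of_nonneg_of_nonpos <;> nlinarith
    exact mul_le_mul_of_nonpos_left hlog h1β
  · have hsum : ∑ s', p s' * Real.exp (β * f s') ≤ ∑ s', p s' * Real.exp (β * g s') :=
      Finset.sum_le_sum fun s _ => by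
        have : β * f s ≤ β * g s := mul_le_mul_of_nonneg_left (hfg s) hb.le
        exact mul_le_mul_of_nonneg_left (Real.exp_le_exp.2 this) (hp0 s)
    have hpos := ubel_sum_pos β p hp0 hp1 f
    have hlog := Real.log_le_log hpos hsum
    have h1β : 0 ≤ (1 / β) := by positivity
    exact mul_le_mul_of_nonneg_left hlog h1β

lemma ubel_cash {S : Type*} [Fintype S] {β : ℝ} (hβ : β ≠ 0) {p : S → ℝ}
    (hp0 : ∀ s, 0 ≤ p s) (hp1 : ∑ s, p s = 1) (f : S → ℝ) (c : ℝ) :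
    Ubel β p (fun s => f s + c) = Ubel β p f + c := by
  unfold Ubel
  have hpos := ubel_sum_pos β p hp0 hp1 f
  have : ∑ s', p s' * Real.exp (β * (f s' + c)) =
      (∑ s', p s' * Real.exp (β * f s')) * Real.exp (β * c) := by
    rw [Finset.sum_mul]
    refine Finset.sum_congr rfl fun s _ => ?_
    rw [mul_add, Real.exp_add]; ring
  rw [this, Real.log_mul (ne_of_gt hpos) (ne_of_gt (Real.exp_pos _)), Real.log_exp]
  field_simp

lemma ubel_abs_le {S : Type*} [Fintype S] {β : ℝ} (hβ : β ≠ 0) {p : S → ℝ}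
    (hp0 : ∀ s, 0 ≤ p s) (hp1 : ∑ s, p s = 1) {f g : S → ℝ} {c : ℝ}
    (hfg : ∀ s, |f s - g s| ≤ c) : |Ubel β p f - Ubel β p g| ≤ c := by
  rw [abs_sub_le_iff]
  constructor
  · have h1 : Ubel β p f ≤ Ubel β p (fun s => g s + c) :=
      ubel_mono hβ hp0 hp1 fun s => by have := abs_le.1 (hfg s); linarith [this.2]
    rw [ubel_cash hβ hp0 hp1] at h1; linarith
  · have h1 : Ubel β p g ≤ Ubel β p (fun s => f s + c) :=
      ubel_mono hβ hp0 hp1 fun s => by have := abs_le.1 (hfg s); linarith [this.1]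
    rw [ubel_cash hβ hp0 hp1] at h1; linarith

/-- **Cross-task policy evaluation bound.**  Let `Qjj` be the optimal entropic
Q-function of task `M_j` (with reward `rj`), let `πj` be a greedy (hence optimal)
policy for `Qjj`, and let `Qji` be the entropic Q-function of policy `πj` evaluated
in task `M_i` (with reward `ri`, same transition kernel).  If
`|ri s a s' - rj s a s'| ≤ δ` for all `s, a, s'`, then
`|Qjj h s a - Qji h s a| ≤ (T - h + 1) δ` for all `h ≤ T + 1`. -/
theorem entropic_cross_task_evaluation {S A : Type*} [Fintype S] [Fintype A] [Nonempty A]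
    (T : ℕ) (β : ℝ) (hβ : β ≠ 0)
    (P : S → A → S → ℝ) (hP0 : ∀ s a s', 0 ≤ P s a s') (hP1 : ∀ s a, ∑ s', P s a s' = 1)
    (ri rj : S → A → S → ℝ) (δ : ℝ)
    (hr : ∀ s a s', |ri s a s' - rj s a s'| ≤ δ)
    (πj : ℕ → S → A)
    (Qjj Qji : ℕ → S → A → ℝ)
    -- `Qjj` is the optimal entropic Q-function of task `M_j`:
    (hQjj : ∀ h, h ≤ T → ∀ s a, Qjj h s a =
      Ubel β (P s a) (fun s' => rj s a s' +
        Finset.univ.sup' Finset.univ_nonempty (fun a' => Qjj (h + 1) s' a')))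
    (hQjjT : ∀ s a, Qjj (T + 1) s a = 0)
    -- `πj` is greedy with respect to `Qjj`:
    (hgreedy : ∀ h s a, Qjj h s a ≤ Qjj h s (πj h s))
    -- `Qji` evaluates the policy `πj` in task `M_i`:
    (hQji : ∀ h, h ≤ T → ∀ s a, Qji h s a =
      Ubel β (P s a) (fun s' => ri s a s' + Qji (h + 1) s' (πj (h + 1) s')))
    (hQjiT : ∀ s a, Qji (T + 1) s a = 0) :
    ∀ h, h ≤ T + 1 → ∀ s a, |Qjj h s a - Qji h s a| ≤ ((T : ℝ) - h + 1) * δ := by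
  -- sup' equals the greedy value
  have hsup : ∀ h s, Finset.univ.sup' Finset.univ_nonempty (fun a' => Qjj h s a')
      = Qjj h s (πj h s) := by
    intro h s
    apply le_antisymm
    · exact Finset.sup'_le _ _ fun a _ => hgreedy h s a
    · exact Finset.le_sup' _ (mem_univ (πj h s))
  suffices H : ∀ n h, T + 1 ≤ h + n → h ≤ T + 1 → ∀ s a,
      |Qjj h s a - Qji h s a| ≤ ((T : ℝ) - h + 1) * δ by
    intro h hh; exact H (T + 1) h (by omega) hh
  intro n
  induction n with
  | zero =>
    intro h h1 h2 s a
    have : h = T + 1 := by omega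
    subst this
    rw [hQjjT, hQjiT]
    push_cast
    simp
  | succ n ih =>
    intro h h1 h2 s a
    rcases eq_or_lt_of_le h2 with he | hlt
    · subst he
      rw [hQjjT, hQjiT]
      push_cast
      simp
    · have hhT : h ≤ T := by omega
      rw [hQjj h hhT s a, hQji h hhT s a]
      have key : ∀ s' : S,
          |(rj s a s' + Finset.univ.sup' Finset.univ_nonempty (fun a' => Qjj (h + 1) s' a')) -
           (ri s a s' + Qji (h + 1) s' (πj (h + 1) s'))| ≤ ((T : ℝ) - h) * δ + δ := by
        intro s'
        rw [hsup (h + 1) s']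
        have h3 := ih (h + 1) (by omega) (by omega) s' (πj (h + 1) s')
        push_cast at h3
        have h4 := hr s a s'
        have h5 : |rj s a s' - ri s a s'| ≤ δ := by rw [abs_sub_comm]; exact h4
        calc |(rj s a s' + Qjj (h + 1) s' (πj (h + 1) s')) -
              (ri s a s' + Qji (h + 1) s' (πj (h + 1) s'))|
            ≤ |rj s a s' - ri s a s'| +
              |Qjj (h + 1) s' (πj (h + 1) s') - Qji (h + 1) s' (πj (h + 1) s')| := by
              have : |(_ : ℝ) + _| ≤ |_| + |_| := abs_add_le (rj s a s' - ri s a s')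
                (Qjj (h + 1) s' (πj (h + 1) s') - Qji (h + 1) s' (πj (h + 1) s'))
              convert this using 2; ring
          _ ≤ δ + ((T : ℝ) - (h + 1) + 1) * δ := add_le_add h5 h3
          _ = ((T : ℝ) - h) * δ + δ := by push_cast; ring
      have := ubel_abs_le hβ (hP0 s a) (hP1 s a) key
      calc _ ≤ ((T : ℝ) - h) * δ + δ := this
        _ = ((T : ℝ) - h + 1) * δ := by ring
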